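/- Every word produced by encode₂ is (A*,ℓ)-addressable: within each block z_i of length ℓ, the only occurrence of an element of A* as an a-gram starting at positions 2 through ℓ−a+1 is excluded, because every window of a consecutive symbols starting at position j ≥ 2 has symbol sum nonzero mod q. -/

import Mathlib

/-- The block construction of Algorithm 2 (see `encode2`). -/
def blockList (q a : ℕ) (hq : 0 < q) (u : List (Fin q)) (c : ℕ → ℕ) : ℕ → List (Fin q)
  | 0 => u
  | m + 1 =>
    let z := blockList q a hq u c m
    let zbad : ℕ := (q - (((z.reverse.take (a - 1)).map Fin.val).sum % q)) % q
    let t := c m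
    z ++ [⟨(if t ≤ zbad then t - 1 else t) % q, Nat.mod_lt _ hq⟩]

/-- Algorithm 2, `encode₂`: concatenate the `M` blocks. -/
def encode2 (q a ℓ M : ℕ) (hq : 0 < q) (u : Fin M → List (Fin q))
    (c : Fin M → ℕ → ℕ) : List (Fin q) :=
  (List.ofFn (fun i : Fin M => blockList q a hq (u i) (c i) (ℓ - a))).flatten


lemma blockList_length (q a : ℕ) (hq : 0 < q) (u : List (Fin q)) (c : ℕ → ℕ) (m : ℕ) :
    (blockList q a hq u c m).length = u.length + m := by
  induction m with
  | zero => rfl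
  | succ m ih => simp [blockList, ih]; omega

lemma blockList_window (q a : ℕ) (hq : 0 < q) (u : List (Fin q)) (c : ℕ → ℕ)
    (hul : u.length = a) (ha : 2 ≤ a) (m : ℕ)
    (hc : ∀ k, k < m → 1 ≤ c k ∧ c k ≤ q - 1) :
    ∀ j, 1 ≤ j → j + a ≤ a + m →
      ((((blockList q a hq u c m).drop j).take a).map Fin.val).sum % q ≠ 0 := by
  induction m with
  | zero => intro j h1 h2; omega
  | succ m ih =>
    intro j h1 h2
    have hlen : (blockList q a hq u c m).length = a + m := by
      rw [blockList_length, hul]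
    by_cases hj : j + a ≤ a + m
    · rw [show blockList q a hq u c (m+1) =
        blockList q a hq u c m ++ [_] from rfl]
      rw [List.drop_append_of_le_length (by omega),
        List.take_append_of_le_length (by simp [hlen]; omega)]
      exact ih (fun k hk => hc k (by omega)) j h1 hj
    · -- j = m + 1, the new window
      have hj' : j = m + 1 := by omega
      subst hj'
      set z := blockList q a hq u c m with hz
      set s : ℕ := ((z.reverse.take (a - 1)).map Fin.val).sum with hs
      set zbad : ℕ := (q - s % q) % q with hzb
      set t := c m with ht
      have hx : blockList q a hq u c (m+1) =
          z ++ [⟨(if t ≤ zbad then t - 1 else t) % q, Nat.mod_lt _ hq⟩] := rfl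
      rw [hx, List.drop_append_of_le_length (by omega)]
      have hdl : (z.drop (m+1)).length = a - 1 := by rw [List.length_drop, hlen]; omega
      have htk : ((z.drop (m+1)) ++ [(⟨(if t ≤ zbad then t - 1 else t) % q,
          Nat.mod_lt _ hq⟩ : Fin q)]).take a = z.drop (m+1) ++ [⟨(if t ≤ zbad then t - 1 else t) % q, Nat.mod_lt _ hq⟩] := by
        apply List.take_of_length_le
        simp [hdl]; omega
      rw [htk]
      -- sum of window = s + x
      have hsum : ((z.drop (m+1)).map Fin.val).sum = s := by
        rw [hs, List.take_reverse, hlen]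
        have : a + m - (a - 1) = m + 1 := by omega
        rw [this, List.map_reverse, List.sum_reverse]
      simp only [List.map_append, List.sum_append, List.map_cons, List.map_nil,
        List.sum_cons, List.sum_nil, hsum]
      -- arithmetic
      have hct := hc m (by omega)
      have hq1 : 1 ≤ q := by omega
      have hsq : s % q < q := Nat.mod_lt _ hq
      have hxval : (if t ≤ zbad then t - 1 else t) % q ≠ zbad := by
        have hzbq : zbad < q := Nat.mod_lt _ hq
        split
        · have h1 : t - 1 < q := by omega
          rw [Nat.mod_eq_of_lt h1]; omega
        · have h1 : t < q := by omega
          rw [Nat.mod_eq_of_lt h1]; omega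
      intro hcon
      apply hxval
      set x := (if t ≤ zbad then t - 1 else t) % q with hxdef
      have hxlt : x < q := Nat.mod_lt _ hq
      -- from (s + x + 0) % q = 0 derive x = zbad
      have hcon' : (s + x) % q = 0 := by simpa using hcon
      have h0 : (s % q + x) % q = 0 := by
        rw [Nat.add_mod, Nat.mod_eq_of_lt hxlt] at hcon'
        exact hcon'
      by_cases hr : s % q = 0
      · have hx0 : x % q = 0 := by simpa [hr] using h0
        rw [Nat.mod_eq_of_lt hxlt] at hx0
        simp [hzb, hr, hx0, Nat.mod_self]
      · obtain ⟨k, hk⟩ := Nat.dvd_of_mod_eq_zero h0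
        match k, hk with
        | 0, hk => omega
        | 1, hk =>
          have : zbad = q - s % q := by
            rw [hzb, Nat.mod_eq_of_lt (by omega)]
          omega
        | (k+2), hk =>
          have h2 : q * 2 ≤ q * (k + 2) := Nat.mul_le_mul_left q (by omega)
          omega

lemma blockList_take (q a : ℕ) (hq : 0 < q) (u : List (Fin q)) (c : ℕ → ℕ) (m : ℕ) :
    (blockList q a hq u c m).take u.length = u := by
  induction m with
  | zero => exact List.take_length
  | succ m ih =>
    rw [show blockList q a hq u c (m+1) = blockList q a hq u c m ++ [_] from rfl,
      List.take_append_of_le_length (by rw [blockList_length]; omega)]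
    exact ih

lemma flatten_drop_blocks {α : Type*} (ℓ : ℕ) :
    ∀ (L : List (List α)), (∀ b ∈ L, b.length = ℓ) →
      ∀ i, (L.flatten).drop (i*ℓ) = (L.drop i).flatten := by
  intro L
  induction L with
  | nil => simp
  | cons hd tl ih =>
    intro hb i
    cases i with
    | zero => simp
    | succ i =>
      rw [List.flatten_cons,
        show (i+1)*ℓ = hd.length + i*ℓ by rw [hb hd (by simp)]; ring,
        List.drop_length_add_append]
      exact ih (fun b hb' => hb b (List.mem_cons_of_mem _ hb')) i

/-- Every output of `encode₂` is `(A*,ℓ)`-addressable: it has length `Mℓ`, each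
block starts with its address, and every window of `a` consecutive symbols of a
block starting at a position `≥ 2` (1-indexed) has symbol sum nonzero mod `q`,
hence lies outside `A* = {u : Σ u_i ≡ 0 mod q}`. -/
theorem stmt_11 (q a ℓ M : ℕ) (hq : 2 ≤ q) (ha : 2 ≤ a) (hℓ : 2 * a ≤ ℓ)
    (u : Fin M → List (Fin q))
    (hulen : ∀ i, (u i).length = a)
    (husum : ∀ i, (((u i).map Fin.val).sum) % q = 0)
    (c : Fin M → ℕ → ℕ)
    (hc : ∀ i m, m < ℓ - a → 1 ≤ c i m ∧ c i m ≤ q - 1) :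
    (encode2 q a ℓ M (by omega) u c).length = M * ℓ ∧
    (∀ i : Fin M,
      (((encode2 q a ℓ M (by omega) u c).drop (i.val * ℓ)).take a) = u i) ∧
    (∀ i : Fin M, ∀ j : ℕ, 1 ≤ j → j + a ≤ ℓ →
      ((((((encode2 q a ℓ M (by omega) u c).drop (i.val * ℓ + j)).take a)).map
        Fin.val).sum) % q ≠ 0) := by
  have hq0 : 0 < q := by omega
  set f : Fin M → List (Fin q) :=
    fun i => blockList q a hq0 (u i) (c i) (ℓ - a) with hf
  have hflen : ∀ i, (f i).length = ℓ := fun i => by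
    rw [hf]; simp only []; rw [blockList_length, hulen]; omega
  have henc : encode2 q a ℓ M (by omega) u c = (List.ofFn f).flatten := rfl
  have hmem : ∀ b ∈ List.ofFn f, b.length = ℓ := by
    intro b hb
    obtain ⟨i, rfl⟩ := List.mem_ofFn.mp hb
    exact hflen i
  have hdrop : ∀ i : Fin M,
      ((List.ofFn f).flatten).drop (i.val * ℓ) =
        f i ++ ((List.ofFn f).drop (i.val + 1)).flatten := by
    intro i
    rw [flatten_drop_blocks ℓ _ hmem i.val,
      List.drop_eq_getElem_cons (by simpa using i.isLt), List.flatten_cons]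
    simp
  refine ⟨?_, ?_, ?_⟩
  · rw [henc, List.length_flatten, List.map_ofFn]
    simp [List.sum_ofFn, Function.comp, hflen, Finset.sum_const, Finset.card_univ,
      mul_comm]
  · intro i
    rw [henc, hdrop i, List.take_append_of_le_length (by rw [hflen]; omega)]
    have := blockList_take q a hq0 (u i) (c i) (ℓ - a)
    rw [hulen] at this
    exact this
  · intro i j h1 h2
    have hsplit : List.drop (i.val * ℓ + j) ((List.ofFn f).flatten) =
        List.drop j (List.drop (i.val * ℓ) ((List.ofFn f).flatten)) := by
      rw [List.drop_drop, Nat.add_comm]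
    rw [henc, hsplit, hdrop i, List.drop_append_of_le_length (by rw [hflen]; omega),
      List.take_append_of_le_length (by rw [List.length_drop, hflen]; omega)]
    have := blockList_window q a hq0 (u i) (c i) (hulen i) ha (ℓ - a)
      (fun k hk => hc i k hk) j h1 (by omega)
    exact this
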